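/- arXiv:math/0503224 — 2 statements merged into one kernel-verified Lean document; each statement's English description precedes it below -/
import Mathlib

section
/- Define the strip array of M ∈ M_N(ℂ) by Φ(M)_{ij} = M_{(i mod N),(j mod N)} for integers i, j with 0 ≤ j − i < N (residues mod N taken in {1,…,N}). Then for all P, Q ∈ M_N(ℂ) and all integers i, k with 0 ≤ k − i < N, one has Φ(P • Q)_{ik} = Σ_{j = i}^{k} Φ(P)_{ij} Φ(Q)_{jk}. Moreover Φ is injective and Φ(M)_{ij} = Φ(M)_{i+N, j+N} for all such i, j. (This realizes (M_N(ℂ), •) as the periodic strips inside the quotient of the ring of ℤ×ℤ upper triangular matrices by the ideal generated by the N-th power of the shift.) -/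
open Matrix BigOperators Finset

/-- `cyc3 i j k` : the sequence `(i,j,k)` of indices is cyclically ordered `⟨i ≤ j ≤ k⟩`,
i.e. some cyclic rotation of it is weakly increasing, with all entries required to be
equal when the first and last entries coincide. -/
def cyc3 {N : ℕ} (i j k : Fin N) : Prop :=
  if i = k then j = i
  else (i ≤ j ∧ j ≤ k) ∨ (j ≤ k ∧ k ≤ i) ∨ (k ≤ i ∧ i ≤ j)

instance cyc3.dec {N : ℕ} (i j k : Fin N) : Decidable (cyc3 i j k) := by
  unfold cyc3; infer_instance

/-- The degenerate product `•` on `N × N` complex matrices: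
`(P • Q)_{ik} = ∑_{j : ⟨i ≤ j ≤ k⟩} P_{ij} Q_{jk}`. -/
noncomputable def cprod {N : ℕ} (P Q : Matrix (Fin N) (Fin N) ℂ) :
    Matrix (Fin N) (Fin N) ℂ :=
  Matrix.of fun i k => ∑ j ∈ Finset.univ.filter (fun j => cyc3 i j k), P i j * Q j k

/-- Reduction of an integer modulo `N`, landing in `Fin N`. -/
def finOfInt (N : ℕ) [NeZero N] (i : ℤ) : Fin N :=
  ⟨(i % (N : ℤ)).toNat, by
    have h0 : 0 < (N : ℤ) := by exact_mod_cast Nat.pos_of_ne_zero (NeZero.ne N)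
    have h1 : 0 ≤ i % (N : ℤ) := Int.emod_nonneg i h0.ne'
    have h2 : i % (N : ℤ) < N := Int.emod_lt_of_pos i h0
    omega⟩

/-- The strip array of `M`: `Φ(M)_{ij} = M_{(i mod N),(j mod N)}` for integers `i, j`. -/
noncomputable def stripPhi (N : ℕ) [NeZero N] (M : Matrix (Fin N) (Fin N) ℂ)
    (i j : ℤ) : ℂ :=
  M (finOfInt N i) (finOfInt N j)


lemma cyc3_iff' {N : ℕ} (i j k : Fin N) : cyc3 i j k ↔
    ((i : ℕ) = k ∧ (j : ℕ) = i) ∨ ((i : ℕ) ≠ k ∧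
      (((i : ℕ) ≤ j ∧ (j : ℕ) ≤ k) ∨ ((j : ℕ) ≤ k ∧ (k : ℕ) ≤ i) ∨
        ((k : ℕ) ≤ i ∧ (i : ℕ) ≤ j))) := by
  unfold cyc3
  rcases eq_or_ne i k with h | h
  · subst h
    rw [if_pos rfl]
    constructor
    · intro hj; exact Or.inl ⟨rfl, congrArg Fin.val hj⟩
    · rintro (⟨-, hj⟩ | ⟨hne, -⟩)
      · exact Fin.ext hj
      · exact absurd rfl hne
  · have h' : (i : ℕ) ≠ (k : ℕ) := fun e => h (Fin.ext e)
    rw [if_neg h]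
    simp only [Fin.le_def]
    tauto

lemma emod_window (N : ℕ) [NeZero N] (i j : ℤ) (h0 : 0 ≤ j - i) (h1 : j - i < N) :
    j % N = i % N + (j - i) ∨ j % N = i % N + (j - i) - N := by
  have hN : 0 < (N : ℤ) := by exact_mod_cast Nat.pos_of_ne_zero (NeZero.ne N)
  have ha0 : 0 ≤ i % N := Int.emod_nonneg i hN.ne'
  have ha1 : i % N < N := Int.emod_lt_of_pos i hN
  have key : j % N = (i % N + (j - i)) % N := by
    conv_lhs => rw [show j = i + (j - i) by ring]
    rw [Int.add_emod, Int.emod_eq_of_lt h0 h1]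
  rcases lt_or_ge (i % N + (j - i)) N with h | h
  · left; rw [key, Int.emod_eq_of_lt (by omega) h]
  · right
    have h2 : (i % N + (j - i) - N + N) % N = (i % N + (j - i) - N) % N :=
      Int.add_emod_right _ _
    rw [key]
    conv_lhs => rw [show i % N + (j - i) = i % N + (j - i) - N + N by ring]
    rw [h2, Int.emod_eq_of_lt (by omega) (by omega)]

lemma emod_sub_window (N : ℕ) [NeZero N] (i b : ℤ) (hb0 : 0 ≤ b) (hb1 : b < N) :
    (b - i) % N = b - i % N ∨ (b - i) % N = b - i % N + N := by
  have hN : 0 < (N : ℤ) := by exact_mod_cast Nat.pos_of_ne_zero (NeZero.ne N)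
  have ha0 : 0 ≤ i % N := Int.emod_nonneg i hN.ne'
  have ha1 : i % N < N := Int.emod_lt_of_pos i hN
  have key : (b - i) % N = (b - i % N) % N := by
    conv_lhs => rw [Int.sub_emod]
    conv_rhs => rw [Int.sub_emod, Int.emod_emod_of_dvd _ dvd_rfl]
  rcases le_or_gt (i % N) b with h | h
  · left; rw [key, Int.emod_eq_of_lt (by omega) (by omega)]
  · right
    have h2 : (b - i % N + N) % N = (b - i % N) % N := Int.add_emod_right _ _
    rw [key, ← h2, Int.emod_eq_of_lt (by omega) (by omega)]

lemma finOfInt_eq_iff (N : ℕ) [NeZero N] (x : ℤ) (j : Fin N) :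
    finOfInt N x = j ↔ x % N = (j : ℤ) := by
  have hN : 0 < (N : ℤ) := by exact_mod_cast Nat.pos_of_ne_zero (NeZero.ne N)
  have h1 : 0 ≤ x % N := Int.emod_nonneg x hN.ne'
  simp [finOfInt, Fin.ext_iff]
  omega

/-- The periodic strip model: for all integers `i ≤ k` with `k − i < N`,
`Φ(P • Q)_{ik} = ∑_{j=i}^{k} Φ(P)_{ij} Φ(Q)_{jk}`; moreover `Φ` is injective and
`N`-periodic along the diagonal.  This realizes `(M_N(ℂ), •)` as the periodic strips in
the quotient of the ring of `ℤ×ℤ` upper triangular matrices by the `N`-th power of the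
shift. -/
theorem brauer_cprod_strip_model (N : ℕ) [NeZero N] :
    (∀ P Q : Matrix (Fin N) (Fin N) ℂ, ∀ i k : ℤ, 0 ≤ k - i → k - i < N →
      stripPhi N (cprod P Q) i k =
        ∑ j ∈ Finset.Icc i k, stripPhi N P i j * stripPhi N Q j k) ∧
    Function.Injective (stripPhi N) ∧
    (∀ M : Matrix (Fin N) (Fin N) ℂ, ∀ i j : ℤ, 0 ≤ j - i → j - i < N →
      stripPhi N M (i + N) (j + N) = stripPhi N M i j) := by
  have hN : 0 < (N : ℤ) := by exact_mod_cast Nat.pos_of_ne_zero (NeZero.ne N)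
  refine ⟨?_, ?_, ?_⟩
  · intro P Q i k h0 h1
    show ∑ j' ∈ Finset.univ.filter (fun j' => cyc3 (finOfInt N i) j' (finOfInt N k)),
        P (finOfInt N i) j' * Q j' (finOfInt N k) = _
    have hiN0 : 0 ≤ i % N := Int.emod_nonneg i hN.ne'
    have hiN1 : i % N < N := Int.emod_lt_of_pos i hN
    have hkw := emod_window N i k h0 h1
    refine (Finset.sum_nbij' (fun j => finOfInt N j)
      (fun j' : Fin N => i + ((j' : ℤ) - i) % N) ?mem1 ?mem2 ?li ?ri ?he).symm
    case mem2 =>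
      intro j' hj'
      simp only [Finset.mem_filter, Finset.mem_univ, true_and, cyc3_iff'] at hj'
      have hb0 : (0:ℤ) ≤ (j' : ℤ) := Int.ofNat_nonneg _
      have hb1 : ((j' : ℤ)) < N := by exact_mod_cast j'.2
      have hsw := emod_sub_window N i (j' : ℤ) hb0 hb1
      have hX0 : 0 ≤ ((j' : ℤ) - i) % N := Int.emod_nonneg _ hN.ne'
      have hX1 : ((j' : ℤ) - i) % N < N := Int.emod_lt_of_pos _ hN
      have hk0 : 0 ≤ k % N := Int.emod_nonneg k hN.ne'
      have hk1 : k % N < N := Int.emod_lt_of_pos k hN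
      have hval : ∀ x : ℤ, ((finOfInt N x : Fin N) : ℕ) = (x % N).toNat := fun _ => rfl
      rw [hval, hval] at hj'
      simp only [Finset.mem_Icc]
      show i ≤ i + ((j' : ℤ) - i) % (N:ℤ) ∧ i + ((j' : ℤ) - i) % (N:ℤ) ≤ k
      omega
    case mem1 =>
      intro j hj
      simp only [Finset.mem_Icc] at hj
      have hjw := emod_window N i j (by omega) (by omega)
      have hj0 : 0 ≤ j % N := Int.emod_nonneg j hN.ne'
      have hj1 : j % N < N := Int.emod_lt_of_pos j hN
      have hk0 : 0 ≤ k % N := Int.emod_nonneg k hN.ne'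
      have hk1 : k % N < N := Int.emod_lt_of_pos k hN
      simp only [Finset.mem_filter, Finset.mem_univ, true_and, cyc3_iff']
      have hval : ∀ x : ℤ, ((finOfInt N x : Fin N) : ℕ) = (x % N).toNat := fun _ => rfl
      rw [hval, hval, hval]
      omega
    case ri =>
      intro j' hj'
      show finOfInt N (i + ((j' : ℤ) - i) % N) = j'
      have hb0 : (0:ℤ) ≤ (j' : ℤ) := Int.ofNat_nonneg _
      have hb1 : ((j' : ℤ)) < N := by exact_mod_cast j'.2
      rw [finOfInt_eq_iff]
      have hsw := emod_sub_window N i (j' : ℤ) hb0 hb1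
      have h2 : (i + ((j' : ℤ) - i) % N) % N = (j' : ℤ) % N := by
        conv_lhs => rw [Int.add_emod, Int.emod_emod_of_dvd _ dvd_rfl, ← Int.add_emod]
        rw [show i + ((j' : ℤ) - i) = (j' : ℤ) by ring]
      rw [h2, Int.emod_eq_of_lt hb0 hb1]
    case li =>
      intro j hj
      show i + (((finOfInt N j : Fin N) : ℤ) - i) % N = j
      simp only [Finset.mem_Icc] at hj
      have hval : ((finOfInt N j : Fin N) : ℤ) = j % N := by
        simp [finOfInt, Int.toNat_of_nonneg (Int.emod_nonneg j hN.ne')]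
      rw [hval]
      have h3 : (j % N - i) % N = (j - i) % N := by
        rw [Int.sub_emod, Int.emod_emod_of_dvd _ dvd_rfl, ← Int.sub_emod]
      rw [h3, Int.emod_eq_of_lt (by omega) (by omega)]
      omega
    case he => intro j hj; rfl
  · intro M M' h
    ext a b
    have := congrFun (congrFun h (a : ℤ)) (b : ℤ)
    simpa [stripPhi, finOfInt_eq_iff, Int.emod_eq_of_lt (Int.ofNat_nonneg _)
      (by exact_mod_cast a.2 : ((a:ℤ)) < N), show finOfInt N (a : ℤ) = a from by
        rw [finOfInt_eq_iff]; exact Int.emod_eq_of_lt (Int.ofNat_nonneg _) (by exact_mod_cast a.2),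
      show finOfInt N (b : ℤ) = b from by
        rw [finOfInt_eq_iff]; exact Int.emod_eq_of_lt (Int.ofNat_nonneg _) (by exact_mod_cast b.2)]
      using this
  · intro M i j _ _
    have h : ∀ x : ℤ, finOfInt N (x + N) = finOfInt N x := by
      intro x
      rw [finOfInt_eq_iff, show x + (N:ℤ) = x + N * 1 by ring, Int.add_mul_emod_self_left]
      simp [finOfInt, Int.toNat_of_nonneg (Int.emod_nonneg x hN.ne')]
    simp [stripPhi, h]
end

section
/- Let N ≥ 2, let i ∈ {1,…,N} (indices mod N), and let C, D ∈ M_N(ℂ) have zero diagonal. Then for all j, m ∈ {1,…,N}: (a) ((e^{i+1,i} C) • D)_{jm} = (e^{i+1,i} (C • D))_{jm} + δ_{i,m} δ_{j,i+1} (CD)_{ii}; (b) (C • (D e^{i+1,i}))_{jm} = ((C • D) e^{i+1,i})_{jm} + δ_{i,m} δ_{j,i+1} (CD)_{i+1,i+1}; (c) ((C e^{i+1,i}) • D)_{jm} = C_{j,i+1} D_{im} if ⟨j ≤ i ≤ m⟩ and 0 otherwise; (d) (C • (e^{i+1,i} D))_{jm} = C_{j,i+1} D_{im} if ⟨j ≤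 i+1 ≤ m⟩ and 0 otherwise. If in addition C_{i,i+1} = 0, then ([e^{i+1,i}, C] • [e^{i+1,i}, C])_{jm} = −δ_{j,i+1} δ_{i,m} (C²)_{i,i+1}. Here juxtaposition, [·,·], and C² denote the ordinary matrix product, commutator, and square. -/
open Matrix BigOperators Finset

lemma cyc3_val {N : ℕ} (a b c : Fin N) : cyc3 a b c ↔
    (if a.val = c.val then b.val = a.val
     else (a.val ≤ b.val ∧ b.val ≤ c.val) ∨ (b.val ≤ c.val ∧ c.val ≤ a.val) ∨
       (c.val ≤ a.val ∧ a.val ≤ b.val)) := by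
  unfold cyc3
  by_cases h : a = c
  · rw [if_pos h, if_pos (by rw [h]), Fin.ext_iff]
  · rw [if_neg h, if_neg (by rwa [← Fin.ext_iff])]
    simp only [Fin.le_def]

lemma cyc3_self {N : ℕ} (a b : Fin N) : cyc3 a b a ↔ b = a := by
  unfold cyc3; rw [if_pos rfl]

lemma hi1 (N : ℕ) [NeZero N] (i : Fin N) :
    ((i+1 : Fin N).val = i.val + 1 ∧ i.val + 1 < N) ∨ ((i+1:Fin N).val = 0 ∧ i.val + 1 = N) := by
  have h := i.isLt
  have h2 : (i + 1 : Fin N).val = (i.val + 1) % N := by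
    simp [Fin.add_def]
  rcases Nat.lt_or_ge (i.val + 1) N with h1 | h1
  · exact Or.inl ⟨by rw [h2, Nat.mod_eq_of_lt h1], h1⟩
  · have h3 : i.val + 1 = N := by omega
    exact Or.inr ⟨by simp [h2, h3], h3⟩

lemma std_mul_apply {N : ℕ} (a b j k : Fin N) (C : Matrix (Fin N) (Fin N) ℂ) :
    (Matrix.single a b (1:ℂ) * C) j k = if j = a then C b k else 0 := by
  simp [Matrix.mul_apply, Matrix.single, ite_and, Matrix.of_apply, eq_comm]

lemma mul_std_apply {N : ℕ} (a b j k : Fin N) (C : Matrix (Fin N) (Fin N) ℂ) :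
    (C * Matrix.single a b (1:ℂ)) j k = if k = b then C j a else 0 := by
  simp [Matrix.mul_apply, Matrix.single, ite_and, Matrix.of_apply, eq_comm]

lemma cprod_apply {N : ℕ} (P Q : Matrix (Fin N) (Fin N) ℂ) (j m : Fin N) :
    cprod P Q j m = ∑ k ∈ Finset.univ.filter (fun k => cyc3 j k m), P j k * Q k m := rfl

/-- The technical identities of the paper's Lemma on `e^{i+1,i}` (indices mod `N`):
for zero-diagonal `C, D` and `E = e^{i+1,i}`, entrywise
`((E C) • D)_{jm} = (E (C • D))_{jm} + δ_{i,m} δ_{j,i+1} (CD)_{ii}`,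
`(C • (D E))_{jm} = ((C • D) E)_{jm} + δ_{i,m} δ_{j,i+1} (CD)_{i+1,i+1}`,
`((C E) • D)_{jm} = C_{j,i+1} D_{im} [⟨j ≤ i ≤ m⟩]`,
`(C • (E D))_{jm} = C_{j,i+1} D_{im} [⟨j ≤ i+1 ≤ m⟩]`,
and, if moreover `C_{i,i+1} = 0`,
`([E,C] • [E,C])_{jm} = −δ_{j,i+1} δ_{i,m} (C²)_{i,i+1}`
(juxtaposition, `[·,·]` and `C²` denote ordinary matrix operations). -/
theorem brauer_assoc_lemma (N : ℕ) [NeZero N] (hN : 2 ≤ N) (i : Fin N)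
    (C D : Matrix (Fin N) (Fin N) ℂ)
    (hC : ∀ j, C j j = 0) (hD : ∀ j, D j j = 0)
    (E : Matrix (Fin N) (Fin N) ℂ)
    (hE : E = Matrix.single (i + 1) i (1 : ℂ)) :
    (∀ j m : Fin N,
      cprod (E * C) D j m =
        (E * cprod C D) j m + (if j = i + 1 ∧ m = i then (C * D) i i else 0)) ∧
    (∀ j m : Fin N,
      cprod C (D * E) j m =
        (cprod C D * E) j m +
          (if j = i + 1 ∧ m = i then (C * D) (i + 1) (i + 1) else 0)) ∧
    (∀ j m : Fin N,
      cprod (C * E) D j m = if cyc3 j i m then C j (i + 1) * D i m else 0) ∧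
    (∀ j m : Fin N,
      cprod C (E * D) j m = if cyc3 j (i + 1) m then C j (i + 1) * D i m else 0) ∧
    (C i (i + 1) = 0 → ∀ j m : Fin N,
      cprod (E * C - C * E) (E * C - C * E) j m =
        -(if j = i + 1 ∧ m = i then (C * C) i (i + 1) else 0)) := by

  have hne : (i+1 : Fin N) ≠ i := by
    have h1 := hi1 N i
    intro h; have := congrArg Fin.val h; omega
  have huniv : ∀ k : Fin N, cyc3 (i+1) k i := by
    intro k
    have h1 := hi1 N i
    have hk := k.isLt; have hi := i.isLt
    rw [cyc3_val]; split_ifs <;> omega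
  have hfuniv : Finset.univ.filter (fun k => cyc3 (i+1) k i) = Finset.univ := by
    ext k; simp [huniv k]
  have harc1 : ∀ m k : Fin N, m ≠ i → cyc3 (i+1) k m → cyc3 i k m := by
    intro m k hm h
    have h1 := hi1 N i
    have hk := k.isLt; have hi := i.isLt; have hmm := m.isLt
    have hm' : m.val ≠ i.val := fun e => hm (Fin.ext e)
    rw [cyc3_val] at h ⊢
    split_ifs at h ⊢ <;> omega
  have harc2 : ∀ m k : Fin N, m ≠ i → cyc3 i k m → ¬ cyc3 (i+1) k m → k = i := by
    intro m k hm h h'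
    have h1 := hi1 N i
    have hk := k.isLt; have hi := i.isLt; have hmm := m.isLt
    have hm' : m.val ≠ i.val := fun e => hm (Fin.ext e)
    rw [cyc3_val] at h h'
    rw [Fin.ext_iff]
    split_ifs at h h' <;> omega
  have harc3 : ∀ j k : Fin N, j ≠ i + 1 → cyc3 j k i → cyc3 j k (i+1) := by
    intro j k hj h
    have h1 := hi1 N i
    have hk := k.isLt; have hi := i.isLt; have hj2 := j.isLt
    have hj' : j.val ≠ (i+1:Fin N).val := fun e => hj (Fin.ext e)
    rw [cyc3_val] at h ⊢
    split_ifs at h ⊢ <;> omega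
  have harc4 : ∀ j k : Fin N, j ≠ i + 1 → cyc3 j k (i+1) → ¬ cyc3 j k i → k = i + 1 := by
    intro j k hj h h'
    have h1 := hi1 N i
    have hk := k.isLt; have hi := i.isLt; have hj2 := j.isLt
    have hj' : j.val ≠ (i+1:Fin N).val := fun e => hj (Fin.ext e)
    rw [cyc3_val] at h h'
    rw [Fin.ext_iff]
    split_ifs at h h' <;> omega
  refine ⟨?_, ?_, ?_, ?_, ?_⟩
  · -- part (a)
    intro j m
    by_cases hj : j = i + 1
    · have e1 : ∀ P : Matrix (Fin N) (Fin N) ℂ, ∀ k : Fin N,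
          (Matrix.single (i+1) i (1:ℂ) * P) (i+1) k = P i k := by
        intro P k; rw [std_mul_apply, if_pos rfl]
      rw [hj, hE]
      by_cases hm : m = i
      · rw [hm, if_pos ⟨rfl, rfl⟩, cprod_apply, hfuniv, e1 (cprod C D) i]
        simp only [e1]
        have hsing : Finset.univ.filter (fun k => cyc3 i k i) = {i} := by
          ext k; simp [cyc3_self]
        rw [cprod_apply, hsing, Finset.sum_singleton, hC i, zero_mul,
          zero_add, Matrix.mul_apply]
      · rw [if_neg (fun hc => hm hc.2), add_zero, cprod_apply, e1 (cprod C D) m,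
          cprod_apply]
        simp only [e1]
        refine Finset.sum_subset ?_ ?_
        · intro k hk
          simp only [Finset.mem_filter, Finset.mem_univ, true_and] at hk ⊢
          exact harc1 m k hm hk
        · intro k hk hk'
          simp only [Finset.mem_filter, Finset.mem_univ, true_and] at hk hk'
          rw [harc2 m k hm hk hk', hC i, zero_mul]
    · have e0 : ∀ P : Matrix (Fin N) (Fin N) ℂ, ∀ k : Fin N,
          (Matrix.single (i+1) i (1:ℂ) * P) j k = 0 := by
        intro P k; rw [std_mul_apply, if_neg hj]
      rw [hE, if_neg (fun hc => hj hc.1), add_zero, cprod_apply]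
      simp only [e0, zero_mul, Finset.sum_const_zero]
  · -- part (b)
    intro j m
    by_cases hm : m = i
    · have e1 : ∀ P : Matrix (Fin N) (Fin N) ℂ, ∀ k : Fin N,
          (P * Matrix.single (i+1) i (1:ℂ)) k i = P k (i+1) := by
        intro P k; rw [mul_std_apply, if_pos rfl]
      rw [hm, hE]
      by_cases hj : j = i + 1
      · rw [hj, if_pos ⟨rfl, rfl⟩, cprod_apply, hfuniv, e1 (cprod C D) (i+1)]
        simp only [e1]
        have hsing : Finset.univ.filter (fun k => cyc3 (i+1) k (i+1)) = {i+1} := by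
          ext k; simp [cyc3_self]
        rw [cprod_apply, hsing, Finset.sum_singleton, hD (i+1), mul_zero,
          zero_add, Matrix.mul_apply]
      · rw [if_neg (fun hc => hj hc.1), add_zero, cprod_apply, e1 (cprod C D) j,
          cprod_apply]
        simp only [e1]
        refine Finset.sum_subset ?_ ?_
        · intro k hk
          simp only [Finset.mem_filter, Finset.mem_univ, true_and] at hk ⊢
          exact harc3 j k hj hk
        · intro k hk hk'
          simp only [Finset.mem_filter, Finset.mem_univ, true_and] at hk hk'
          rw [harc4 j k hj hk hk', hD (i+1), mul_zero]
    · have e0 : ∀ P : Matrix (Fin N) (Fin N) ℂ, ∀ k : Fin N,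
          (P * Matrix.single (i+1) i (1:ℂ)) k m = 0 := by
        intro P k; rw [mul_std_apply, if_neg hm]
      rw [hE, if_neg (fun hc => hm hc.2), add_zero, cprod_apply]
      simp only [e0, mul_zero, Finset.sum_const_zero]
  · -- part (c)
    intro j m
    simp only [cprod_apply, hE, mul_std_apply, ite_mul, zero_mul]
    rw [Finset.sum_ite_eq']
    simp [Finset.mem_filter]
  · -- part (d)
    intro j m
    have e1 : ∀ k : Fin N, C j k * (Matrix.single (i+1) i (1:ℂ) * D) k m
        = if k = i + 1 then C j k * D i m else 0 := by
      intro k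
      rw [std_mul_apply]
      by_cases hk : k = i + 1 <;> simp [hk]
    simp only [cprod_apply, hE, e1]
    rw [Finset.sum_ite_eq']
    simp [Finset.mem_filter]
  · -- part (e)
    intro hCi j m
    by_cases h : j = i + 1 ∧ m = i
    · obtain ⟨hj, hm⟩ := h
      have eA1 : ∀ k : Fin N, (E * C - C * E) (i+1) k = C i k := by
        intro k
        rw [Matrix.sub_apply, hE, std_mul_apply, mul_std_apply]
        simp [hC]
      have eA2 : ∀ k : Fin N, (E * C - C * E) k i = -(C k (i+1)) := by
        intro k
        rw [Matrix.sub_apply, hE, std_mul_apply, mul_std_apply]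
        simp [hC]
      rw [hj, hm, if_pos ⟨rfl, rfl⟩, cprod_apply, hfuniv]
      simp only [eA1, eA2, mul_neg, Matrix.mul_apply]
      rw [← Finset.sum_neg_distrib]
    · rw [if_neg h, neg_zero, cprod_apply]
      refine Finset.sum_eq_zero ?_
      intro k _
      rw [Matrix.sub_apply, Matrix.sub_apply, hE, std_mul_apply, std_mul_apply,
        mul_std_apply, mul_std_apply]
      by_cases hj : j = i + 1 <;> by_cases hm : m = i
      · exact absurd ⟨hj, hm⟩ h
      · by_cases hk2 : k = i + 1 <;> simp [hj, hm, hk2, hCi, hne]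
      · by_cases hk : k = i <;> simp [hj, hm, hk, hCi, hne, Ne.symm hne]
      · by_cases hk : k = i <;> simp [hj, hm, hk, hne, Ne.symm hne]
end
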